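/- Let λ₁, λ₂ > 0, f₁ > 0, f₂ < 0, 0 < ρ ≤ f₁ with Φ(ρ) > 0, K > 0. Define A₀ = λ₁/(ρ+λ₁-f₁), B₀ = -λ₁K/(ρ+λ₁), κ₂ = (ρ+λ₁-f₁β₂)/λ₁, and x* = -(K + κ₂B₀)/(κ₂A₀ - 1). Then x* = ((ρ+λ₁-f₁)/(ρ+λ₁)) · (Kβ₂/(β₂-1)). -/

import Mathlib

theorem xstar_alternative
    (l1 l2 f1 f2 ρ K : ℝ)
    (hl1 : 0 < l1) (hl2 : 0 < l2) (hf1 : 0 < f1) (hf2 : f2 < 0)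
    (hρ : 0 < ρ) (hρf1 : ρ ≤ f1) (hK : 0 < K)
    (hΦ : (ρ + l1 - f1) * (ρ + l2 - f2) - l1 * l2 > 0)
    (D1 D2 β2 κ2 A0 B0 xstar : ℝ)
    (hD1 : D1 = (ρ + l1) * f2 + (ρ + l2) * f1)
    (hD2 : D2 = (ρ + l1) * (ρ + l2) - l1 * l2)
    (hβ2 : β2 = (D1 - Real.sqrt (D1 ^ 2 - 4 * f1 * f2 * D2)) / (2 * f1 * f2))
    (hκ2 : κ2 = (ρ + l1 - f1 * β2) / l1)
    (hA0 : A0 = l1 / (ρ + l1 - f1))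
    (hB0 : B0 = -(l1 * K) / (ρ + l1))
    (hx : xstar = -(K + κ2 * B0) / (κ2 * A0 - 1)) :
    xstar = ((ρ + l1 - f1) / (ρ + l1)) * (K * β2 / (β2 - 1)) := by
  have h2 : 0 < ρ + l2 - f2 := by linarith
  have h1 : 0 < ρ + l1 - f1 := by
    nlinarith [mul_pos hl1 hl2]
  have hρl1 : (0:ℝ) < ρ + l1 := by linarith
  subst hκ2 hA0 hB0 hx
  rcases eq_or_ne β2 1 with hb | hb
  · subst hb
    have : (ρ + l1 - f1 * 1) / l1 * (l1 / (ρ + l1 - f1)) - 1 = 0 := by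
      field_simp
      ring
    rw [this]
    simp
  · have hβ1 : β2 - 1 ≠ 0 := sub_ne_zero.mpr hb
    have hden : (ρ + l1 - f1 * β2) / l1 * (l1 / (ρ + l1 - f1)) - 1
        = f1 * (1 - β2) / (ρ + l1 - f1) := by
      field_simp
      ring
    rw [hden]
    have h1b : f1 * (1 - β2) ≠ 0 :=
      mul_ne_zero hf1.ne' (by intro h; apply hb; linarith [sub_eq_zero.mp h])
    field_simp
    ring
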